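/- arXiv:2201.00261 — 4 statements merged into one kernel-verified Lean document; each statement's English description precedes it below -/
import Mathlib

section
/- Let r > 0, let x₁, x₂, x₃ ∈ ℝ³, and let x ∈ ℝ³ with x ≠ 0 be of the form x = x₁ + ξ(x₂−x₁) + η(x₃−x₁) for some ξ, η ∈ ℝ. Define u = (r/‖x‖)·((x₂−x₁) − (⟨x, x₂−x₁⟩/⟨x,x⟩)·x) and v = (r/‖x‖)·((x₃−x₁) − (⟨x, x₃−x₁⟩/⟨x,x⟩)·x). Then u × v = (r²·det[x₁,x₂,x₃]/‖x‖⁴)·x; in particular ‖u × v‖ = (r²/‖x‖³)·|det[x₁,x₂,x₃]|. -/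
open scoped RealInnerProductSpace

set_option maxHeartbeats 1000000

/-- Determinant of the 3×3 matrix with columns `a`, `b`, `c`. -/
noncomputable def det3 (a b c : EuclideanSpace ℝ (Fin 3)) : ℝ :=
  Matrix.det (Matrix.transpose (Matrix.of ![(a : Fin 3 → ℝ), (b : Fin 3 → ℝ), (c : Fin 3 → ℝ)]))

/-- The cross product on `ℝ³`. -/
noncomputable def cross3 (a b : EuclideanSpace ℝ (Fin 3)) : EuclideanSpace ℝ (Fin 3) :=
  WithLp.toLp 2 (crossProduct (a : Fin 3 → ℝ) (b : Fin 3 → ℝ))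

lemma det3_eq (a b c : EuclideanSpace ℝ (Fin 3)) :
    det3 a b c = a 0 * (b 1 * c 2 - b 2 * c 1) - b 0 * (a 1 * c 2 - a 2 * c 1)
      + c 0 * (a 1 * b 2 - a 2 * b 1) := by
  rw [det3, Matrix.det_transpose, Matrix.det_fin_three]
  simp [Matrix.of_apply]
  ring

lemma cross3_proj_key (x a b : EuclideanSpace ℝ (Fin 3)) (hq : ⟪x,x⟫ ≠ 0) :
    cross3 (a - (⟪x,a⟫/⟪x,x⟫)•x) (b - (⟪x,b⟫/⟪x,x⟫)•x) = (det3 a b x / ⟪x,x⟫) • x := by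
  have hq' : x 0 * x 0 + x 1 * x 1 + x 2 * x 2 ≠ 0 := by
    have h := hq
    simp only [PiLp.inner_apply, Fin.sum_univ_three, RCLike.inner_apply, conj_trivial] at h
    convert h using 2 <;> ring
  have hxx : ⟪x,x⟫ = x 0 * x 0 + x 1 * x 1 + x 2 * x 2 := by
    simp only [PiLp.inner_apply, Fin.sum_univ_three, RCLike.inner_apply, conj_trivial]
  generalize hs : ⟪x,x⟫ = s at hq hxx ⊢
  ext i
  fin_cases i <;>
  · simp [cross3, cross_apply, det3_eq, PiLp.inner_apply, Fin.sum_univ_three,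
      PiLp.sub_apply, PiLp.smul_apply, smul_eq_mul, RCLike.inner_apply, conj_trivial]
    field_simp
    subst hxx
    ring

theorem stmt_2 (r : ℝ) (hr : 0 < r) (x₁ x₂ x₃ x : EuclideanSpace ℝ (Fin 3)) (hx : x ≠ 0)
    (ξ η : ℝ) (hxform : x = x₁ + ξ • (x₂ - x₁) + η • (x₃ - x₁))
    (u v : EuclideanSpace ℝ (Fin 3))
    (hu : u = (r / ‖x‖) • ((x₂ - x₁) - (⟪x, x₂ - x₁⟫ / ⟪x, x⟫) • x))
    (hv : v = (r / ‖x‖) • ((x₃ - x₁) - (⟪x, x₃ - x₁⟫ / ⟪x, x⟫) • x)) :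
    cross3 u v = ((r ^ 2 * det3 x₁ x₂ x₃) / ‖x‖ ^ 4) • x ∧
      ‖cross3 u v‖ = (r ^ 2 / ‖x‖ ^ 3) * |det3 x₁ x₂ x₃| := by
  have hq : ⟪x, x⟫ ≠ 0 := inner_self_ne_zero.mpr hx
  have hn : ‖x‖ ≠ 0 := norm_ne_zero_iff.mpr hx
  have hn2 : ⟪x, x⟫ = ‖x‖ ^ 2 := real_inner_self_eq_norm_sq x
  have hdet : det3 (x₂ - x₁) (x₃ - x₁) x = det3 x₁ x₂ x₃ := by
    simp only [det3_eq, hxform, PiLp.add_apply, PiLp.sub_apply, PiLp.smul_apply, smul_eq_mul]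
    ring
  have hcross : cross3 u v = ((r / ‖x‖) * (r / ‖x‖)) •
      cross3 ((x₂ - x₁) - (⟪x, x₂ - x₁⟫ / ⟪x, x⟫) • x)
             ((x₃ - x₁) - (⟪x, x₃ - x₁⟫ / ⟪x, x⟫) • x) := by
    rw [hu, hv]
    simp [cross3, smul_smul, LinearMap.map_smul, WithLp.ofLp_smul, LinearMap.map_smul₂, WithLp.toLp_sub, WithLp.toLp_smul]
  have h1 : cross3 u v = ((r ^ 2 * det3 x₁ x₂ x₃) / ‖x‖ ^ 4) • x := by
    rw [hcross, cross3_proj_key x _ _ hq, smul_smul, hdet]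
    congr 1
    rw [hn2]
    field_simp
  refine ⟨h1, ?_⟩
  rw [h1, norm_smul, Real.norm_eq_abs, abs_div, abs_mul,
    abs_of_nonneg (by positivity : (0:ℝ) ≤ r ^ 2),
    abs_of_nonneg (by positivity : (0:ℝ) ≤ ‖x‖ ^ 4)]
  field_simp
end

section
/- Let r > 0 and let x₁, x₂, x₃ ∈ ℝ³ satisfy ‖x₁‖ = ‖x₂‖ = ‖x₃‖ = r and ‖x_i − x_j‖ ≤ h for all i, j. Then for all λ₁, λ₂, λ₃ ≥ 0 with λ₁ + λ₂ + λ₃ = 1, the convex combination x = λ₁x₁ + λ₂x₂ + λ₃x₃ satisfies r² − h²/3 ≤ ‖x‖² ≤ r². -/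
theorem stmt_7 (r h : ℝ) (hr : 0 < r) (x₁ x₂ x₃ : EuclideanSpace ℝ (Fin 3))
    (h1 : ‖x₁‖ = r) (h2 : ‖x₂‖ = r) (h3 : ‖x₃‖ = r)
    (h12 : ‖x₁ - x₂‖ ≤ h) (h23 : ‖x₂ - x₃‖ ≤ h) (h13 : ‖x₁ - x₃‖ ≤ h)
    (l₁ l₂ l₃ : ℝ) (hl₁ : 0 ≤ l₁) (hl₂ : 0 ≤ l₂) (hl₃ : 0 ≤ l₃)
    (hsum : l₁ + l₂ + l₃ = 1) :
    r ^ 2 - h ^ 2 / 3 ≤ ‖l₁ • x₁ + l₂ • x₂ + l₃ • x₃‖ ^ 2 ∧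
      ‖l₁ • x₁ + l₂ • x₂ + l₃ • x₃‖ ^ 2 ≤ r ^ 2 := by
  have e12 : ‖x₁ - x₂‖ ^ 2 = r ^ 2 - 2 * inner ℝ x₁ x₂ + r ^ 2 := by
    rw [@norm_sub_sq_real, h1, h2]
  have e23 : ‖x₂ - x₃‖ ^ 2 = r ^ 2 - 2 * inner ℝ x₂ x₃ + r ^ 2 := by
    rw [@norm_sub_sq_real, h2, h3]
  have e13 : ‖x₁ - x₃‖ ^ 2 = r ^ 2 - 2 * inner ℝ x₁ x₃ + r ^ 2 := by
    rw [@norm_sub_sq_real, h1, h3]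
  have hy : ‖l₁ • x₁ + l₂ • x₂ + l₃ • x₃‖ ^ 2 =
      l₁ ^ 2 * r ^ 2 + l₂ ^ 2 * r ^ 2 + l₃ ^ 2 * r ^ 2
        + 2 * (l₁ * l₂) * inner ℝ x₁ x₂ + 2 * (l₂ * l₃) * inner ℝ x₂ x₃
        + 2 * (l₁ * l₃) * inner ℝ x₁ x₃ := by
    rw [← @real_inner_self_eq_norm_sq]
    simp only [inner_add_left, inner_add_right, real_inner_smul_left,
      real_inner_smul_right, real_inner_self_eq_norm_sq, h1, h2, h3,
      norm_smul, Real.norm_eq_abs, mul_pow, sq_abs,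
      real_inner_comm x₂ x₁, real_inner_comm x₃ x₂, real_inner_comm x₃ x₁]
    ring
  have hh : 0 ≤ h := le_trans (norm_nonneg _) h12
  have s12 : ‖x₁ - x₂‖ ^ 2 ≤ h ^ 2 := by
    apply sq_le_sq' _ h12; linarith [norm_nonneg (x₁ - x₂)]
  have s23 : ‖x₂ - x₃‖ ^ 2 ≤ h ^ 2 := by
    apply sq_le_sq' _ h23; linarith [norm_nonneg (x₂ - x₃)]
  have s13 : ‖x₁ - x₃‖ ^ 2 ≤ h ^ 2 := by
    apply sq_le_sq' _ h13; linarith [norm_nonneg (x₁ - x₃)]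
  have n12 : 0 ≤ ‖x₁ - x₂‖ ^ 2 := sq_nonneg _
  have n23 : 0 ≤ ‖x₂ - x₃‖ ^ 2 := sq_nonneg _
  have n13 : 0 ≤ ‖x₁ - x₃‖ ^ 2 := sq_nonneg _
  have i12 : (inner ℝ x₁ x₂ : ℝ) = r ^ 2 - ‖x₁ - x₂‖ ^ 2 / 2 := by linarith
  have i23 : (inner ℝ x₂ x₃ : ℝ) = r ^ 2 - ‖x₂ - x₃‖ ^ 2 / 2 := by linarith
  have i13 : (inner ℝ x₁ x₃ : ℝ) = r ^ 2 - ‖x₁ - x₃‖ ^ 2 / 2 := by linarith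
  have hy' : ‖l₁ • x₁ + l₂ • x₂ + l₃ • x₃‖ ^ 2 =
      r ^ 2 - (l₁ * l₂ * ‖x₁ - x₂‖ ^ 2 + l₂ * l₃ * ‖x₂ - x₃‖ ^ 2
        + l₁ * l₃ * ‖x₁ - x₃‖ ^ 2) := by
    rw [hy, i12, i23, i13]
    linear_combination r ^ 2 * (l₁ + l₂ + l₃ + 1) * hsum
  have aux : l₁ * l₂ + l₂ * l₃ + l₁ * l₃ ≤ 1 / 3 := by
    nlinarith [sq_nonneg (l₁ - l₂), sq_nonneg (l₂ - l₃), sq_nonneg (l₁ - l₃)]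
  have key : h ^ 2 * (l₁ * l₂ + l₂ * l₃ + l₁ * l₃) ≤ h ^ 2 * (1 / 3) :=
    mul_le_mul_of_nonneg_left aux (sq_nonneg h)
  constructor
  · rw [hy']
    have b12 := mul_le_mul_of_nonneg_left s12 (mul_nonneg hl₁ hl₂)
    have b23 := mul_le_mul_of_nonneg_left s23 (mul_nonneg hl₂ hl₃)
    have b13 := mul_le_mul_of_nonneg_left s13 (mul_nonneg hl₁ hl₃)
    linarith
  · rw [hy']
    have b12 := mul_nonneg (mul_nonneg hl₁ hl₂) n12
    have b23 := mul_nonneg (mul_nonneg hl₂ hl₃) n23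
    have b13 := mul_nonneg (mul_nonneg hl₁ hl₃) n13
    linarith
end

section
/- Let a, b, c ∈ ℝ³ and let 0 ≤ ε ≤ 1. Let ã, b̃, c̃ ∈ ℝ³ be componentwise relative perturbations, i.e., |ã_i − a_i| ≤ ε·|a_i|, |b̃_i − b_i| ≤ ε·|b_i|, and |c̃_i − c_i| ≤ ε·|c_i| for each i ∈ {1,2,3}. Then |⟨ã, b̃ × c̃⟩ − ⟨a, b × c⟩| ≤ 42·ε·‖a‖·‖b‖·‖c‖. -/
open scoped RealInnerProductSpace

lemma coord_le (a : EuclideanSpace ℝ (Fin 3)) (i : Fin 3) : |a i| ≤ ‖a‖ := by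
  rw [EuclideanSpace.norm_eq]
  have h : |a i| = Real.sqrt (‖a i‖ ^ 2) := by rw [Real.sqrt_sq_eq_abs]; simp
  rw [h]
  apply Real.sqrt_le_sqrt
  exact Finset.single_le_sum (f := fun j => ‖a j‖ ^ 2) (fun j _ => sq_nonneg _) (Finset.mem_univ i)

lemma tripleprod (a b c : EuclideanSpace ℝ (Fin 3)) :
    ⟪a, cross3 b c⟫ = a 0 * (b 1 * c 2 - b 2 * c 1) + a 1 * (b 2 * c 0 - b 0 * c 2)
      + a 2 * (b 0 * c 1 - b 1 * c 0) := by
  simp [cross3, crossProduct, PiLp.inner_apply, Fin.sum_univ_three, RCLike.inner_apply]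
  ring

lemma key (ε x y z x' y' z' : ℝ) (hε0 : 0 ≤ ε) (hε1 : ε ≤ 1)
    (hx : |x' - x| ≤ ε * |x|) (hy : |y' - y| ≤ ε * |y|) (hz : |z' - z| ≤ ε * |z|) :
    |x' * y' * z' - x * y * z| ≤ 7 * ε * (|x| * |y| * |z|) := by
  have hy2 : |y'| ≤ 2 * |y| := by
    calc |y'| ≤ |y| + |y' - y| := by
          have := abs_add_le (y' - y) y; simpa [add_comm] using this
      _ ≤ |y| + ε * |y| := by linarith
      _ ≤ 2 * |y| := by nlinarith [abs_nonneg y]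
  have hz2 : |z'| ≤ 2 * |z| := by
    calc |z'| ≤ |z| + |z' - z| := by
          have := abs_add_le (z' - z) z; simpa [add_comm] using this
      _ ≤ |z| + ε * |z| := by linarith
      _ ≤ 2 * |z| := by nlinarith [abs_nonneg z]
  have e : x' * y' * z' - x * y * z
      = (x' - x) * (y' * z') + x * ((y' - y) * z') + x * (y * (z' - z)) := by ring
  rw [e]
  calc |(x' - x) * (y' * z') + x * ((y' - y) * z') + x * (y * (z' - z))|
      ≤ |(x' - x) * (y' * z')| + |x * ((y' - y) * z')| + |x * (y * (z' - z))| := by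
        exact (abs_add_le _ _).trans (by gcongr; exact abs_add_le _ _)
    _ = |x' - x| * (|y'| * |z'|) + |x| * (|y' - y| * |z'|) + |x| * (|y| * |z' - z|) := by
        simp [abs_mul]
    _ ≤ (ε * |x|) * ((2 * |y|) * (2 * |z|)) + |x| * ((ε * |y|) * (2 * |z|))
        + |x| * (|y| * (ε * |z|)) := by gcongr <;> positivity
    _ = 7 * ε * (|x| * |y| * |z|) := by ring

theorem stmt_10 (a b c : EuclideanSpace ℝ (Fin 3)) (ε : ℝ) (hε0 : 0 ≤ ε) (hε1 : ε ≤ 1)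
    (ta tb tc : EuclideanSpace ℝ (Fin 3))
    (ha : ∀ i : Fin 3, |ta i - a i| ≤ ε * |a i|)
    (hb : ∀ i : Fin 3, |tb i - b i| ≤ ε * |b i|)
    (hc : ∀ i : Fin 3, |tc i - c i| ≤ ε * |c i|) :
    |⟪ta, cross3 tb tc⟫ - ⟪a, cross3 b c⟫| ≤ 42 * ε * ‖a‖ * ‖b‖ * ‖c‖ := by
  rw [tripleprod, tripleprod]
  have bnd : ∀ i j k : Fin 3,
      |ta i * tb j * tc k - a i * b j * c k| ≤ 7 * ε * (‖a‖ * ‖b‖ * ‖c‖) := by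
    intro i j k
    calc |ta i * tb j * tc k - a i * b j * c k|
        ≤ 7 * ε * (|a i| * |b j| * |c k|) := key ε _ _ _ _ _ _ hε0 hε1 (ha i) (hb j) (hc k)
      _ ≤ 7 * ε * (‖a‖ * ‖b‖ * ‖c‖) := by
          gcongr <;> first
            | exact coord_le a i
            | exact coord_le b j
            | exact coord_le c k
            | positivity
  have h1 := abs_le.mp (bnd 0 1 2)
  have h2 := abs_le.mp (bnd 0 2 1)
  have h3 := abs_le.mp (bnd 1 2 0)
  have h4 := abs_le.mp (bnd 1 0 2)
  have h5 := abs_le.mp (bnd 2 0 1)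
  have h6 := abs_le.mp (bnd 2 1 0)
  rw [abs_le]
  constructor <;> nlinarith [h1.1, h1.2, h2.1, h2.2, h3.1, h3.2, h4.1, h4.2, h5.1, h5.2, h6.1, h6.2]
end

section
/- Let r > 0 and let x₁, x₂, x₃ ∈ ℝ³ with ‖x₁‖ = ‖x₂‖ = ‖x₃‖ = r and det[x₁,x₂,x₃] > 0 (counterclockwise orientation). Then for every (ξ,η) ∈ Δ, writing x = x(ξ,η) (which is nonzero), u = (r/‖x‖)·((x₂−x₁) − (⟨x, x₂−x₁⟩/⟨x,x⟩)·x), and v = (r/‖x‖)·((x₃−x₁) − (⟨x, x₃−x₁⟩/⟨x,x⟩)·x), one has ⟨x, u × v⟩ > 0; i.e., the normal u × v to the sphere induced by the radial projection points outward. -/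
open scoped RealInnerProductSpace

/-- The linear triangle map `x(ξ,η) = (1−ξ−η)x₁ + ξx₂ + ηx₃`. -/
noncomputable def triMap (x₁ x₂ x₃ : EuclideanSpace ℝ (Fin 3)) (ξ η : ℝ) :
    EuclideanSpace ℝ (Fin 3) :=
  (1 - ξ - η) • x₁ + ξ • x₂ + η • x₃

/-- The reference triangle `Δ = {(ξ,η) : ξ ≥ 0, η ≥ 0, ξ + η ≤ 1}`. -/
def refTri : Set (ℝ × ℝ) := {q | 0 ≤ q.1 ∧ 0 ≤ q.2 ∧ q.1 + q.2 ≤ 1}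

lemma tri_apply (x₁ x₂ x₃ : EuclideanSpace ℝ (Fin 3)) (ξ η : ℝ) (i : Fin 3) :
    triMap x₁ x₂ x₃ ξ η i = (1 - ξ - η) * x₁ i + ξ * x₂ i + η * x₃ i := by
  simp [triMap]

lemma key_s12 (x a b : EuclideanSpace ℝ (Fin 3)) (c s t : ℝ) :
    ⟪x, cross3 (c • (a - s • x)) (c • (b - t • x))⟫ = c ^ 2 * det3 x a b := by
  simp [cross3, crossProduct, PiLp.inner_apply, RCLike.inner_apply, conj_trivial,
    Fin.sum_univ_three, det3_eq]
  ring

lemma det_tri (x₁ x₂ x₃ : EuclideanSpace ℝ (Fin 3)) (ξ η : ℝ) :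
    det3 (triMap x₁ x₂ x₃ ξ η) (x₂ - x₁) (x₃ - x₁) = det3 x₁ x₂ x₃ := by
  simp only [det3_eq, tri_apply, PiLp.sub_apply]
  ring

lemma det_c1 (x₁ x₂ x₃ : EuclideanSpace ℝ (Fin 3)) (ξ η : ℝ) :
    det3 (triMap x₁ x₂ x₃ ξ η) x₂ x₃ = (1 - ξ - η) * det3 x₁ x₂ x₃ := by
  simp only [det3_eq, tri_apply]; ring

lemma det_c2 (x₁ x₂ x₃ : EuclideanSpace ℝ (Fin 3)) (ξ η : ℝ) :
    det3 x₁ (triMap x₁ x₂ x₃ ξ η) x₃ = ξ * det3 x₁ x₂ x₃ := by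
  simp only [det3_eq, tri_apply]; ring

lemma det_c3 (x₁ x₂ x₃ : EuclideanSpace ℝ (Fin 3)) (ξ η : ℝ) :
    det3 x₁ x₂ (triMap x₁ x₂ x₃ ξ η) = η * det3 x₁ x₂ x₃ := by
  simp only [det3_eq, tri_apply]; ring

theorem stmt_12 (r : ℝ) (hr : 0 < r) (x₁ x₂ x₃ : EuclideanSpace ℝ (Fin 3))
    (h1 : ‖x₁‖ = r) (h2 : ‖x₂‖ = r) (h3 : ‖x₃‖ = r) (hdet : 0 < det3 x₁ x₂ x₃)
    (ξ η : ℝ) (hq : (ξ, η) ∈ refTri) :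
    triMap x₁ x₂ x₃ ξ η ≠ 0 ∧
      0 < ⟪triMap x₁ x₂ x₃ ξ η,
          cross3
            ((r / ‖triMap x₁ x₂ x₃ ξ η‖) •
              ((x₂ - x₁) -
                (⟪triMap x₁ x₂ x₃ ξ η, x₂ - x₁⟫ /
                    ⟪triMap x₁ x₂ x₃ ξ η, triMap x₁ x₂ x₃ ξ η⟫) • triMap x₁ x₂ x₃ ξ η))
            ((r / ‖triMap x₁ x₂ x₃ ξ η‖) •
              ((x₃ - x₁) -
                (⟪triMap x₁ x₂ x₃ ξ η, x₃ - x₁⟫ /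
                    ⟪triMap x₁ x₂ x₃ ξ η, triMap x₁ x₂ x₃ ξ η⟫) • triMap x₁ x₂ x₃ ξ η))⟫ := by
  have hD := hdet.ne'
  have hx : triMap x₁ x₂ x₃ ξ η ≠ 0 := by
    intro h
    have z0 : ∀ a b : EuclideanSpace ℝ (Fin 3), det3 (0 : EuclideanSpace ℝ (Fin 3)) a b = 0 := by
      intro a b; simp [det3_eq]
    have z1 : ∀ a b : EuclideanSpace ℝ (Fin 3), det3 a (0 : EuclideanSpace ℝ (Fin 3)) b = 0 := by
      intro a b; simp [det3_eq]
    have z2 : ∀ a b : EuclideanSpace ℝ (Fin 3), det3 a b (0 : EuclideanSpace ℝ (Fin 3)) = 0 := by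
      intro a b; simp [det3_eq]
    have e1 : (1 - ξ - η) * det3 x₁ x₂ x₃ = 0 := by rw [← det_c1, h, z0]
    have e2 : ξ * det3 x₁ x₂ x₃ = 0 := by rw [← det_c2 x₁ x₂ x₃ ξ η, h, z1]
    have e3 : η * det3 x₁ x₂ x₃ = 0 := by rw [← det_c3 x₁ x₂ x₃ ξ η, h, z2]
    have f1 := (mul_eq_zero.mp e1).resolve_right hD
    have f2 := (mul_eq_zero.mp e2).resolve_right hD
    have f3 := (mul_eq_zero.mp e3).resolve_right hD
    linarith
  refine ⟨hx, ?_⟩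
  rw [key_s12, det_tri]
  have hn : 0 < ‖triMap x₁ x₂ x₃ ξ η‖ := norm_pos_iff.mpr hx
  exact mul_pos (pow_pos (div_pos hr hn) 2) hdet
end
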